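/- Assume a_X ≥ b_X ≥ 0 with a_X > 0, a_Y + b_Y > 0, and a_Y ≥ b_Y. Then T_X'(x) < 0 for every x ∈ (1/2, 1). -/

import Mathlib

open Real Filter Set Topology

lemma key_ineq {t : ℝ} (ht1 : 1/2 < t) (ht2 : t < 1) :
    t * (1 - t) * (Real.log t - Real.log (1 - t)) < t - 1/2 := by
  set f : ℝ → ℝ := fun s => s - 1/2 - s * (1 - s) * (Real.log s - Real.log (1 - s)) with hf
  have hmono : StrictMonoOn f (Set.Ico (1/2:ℝ) 1) := by
    have hcont : ContinuousOn f (Set.Ico (1/2:ℝ) 1) := by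
      apply ContinuousOn.sub (continuousOn_id.sub continuousOn_const)
      apply ContinuousOn.mul (continuousOn_id.mul (continuousOn_const.sub continuousOn_id))
      apply ContinuousOn.sub
      · exact Real.continuousOn_log.mono (fun s hs => by
          simp only [mem_compl_iff, mem_singleton_iff]; intro h; rw [h] at hs
          simp only [mem_Ico] at hs; linarith [hs.1])
      · apply ContinuousOn.comp Real.continuousOn_log
          (continuousOn_const.sub continuousOn_id)
        intro s hs
        simp only [mem_compl_iff, mem_singleton_iff, mem_Ico] at hs ⊢
        intro h; simp only [Pi.sub_apply, id] at h; linarith [hs.2, h]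
    apply strictMonoOn_of_deriv_pos (convex_Ico _ _) hcont
    intro s hs
    rw [interior_Ico] at hs
    obtain ⟨hs1, hs2⟩ := hs
    have hs0 : (0:ℝ) < s := by linarith
    have hs1' : (0:ℝ) < 1 - s := by linarith
    have hd : HasDerivAt f ((2*s - 1) * (Real.log s - Real.log (1 - s))) s := by
      have hlog1 : HasDerivAt (fun s : ℝ => Real.log s) s⁻¹ s :=
        Real.hasDerivAt_log (ne_of_gt hs0)
      have hin : HasDerivAt (fun s : ℝ => 1 - s) (-1) s := (hasDerivAt_id s).const_sub 1
      have hlog2 : HasDerivAt (fun s : ℝ => Real.log (1 - s)) (-1 / (1 - s)) s :=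
        hin.log (ne_of_gt hs1')
      have hg : HasDerivAt (fun s : ℝ => s * (1 - s)) (1 * (1 - s) + s * (-1)) s :=
        (hasDerivAt_id s).mul hin
      have hh : HasDerivAt (fun s : ℝ => Real.log s - Real.log (1 - s))
          (s⁻¹ - (-1 / (1 - s))) s := hlog1.sub hlog2
      have : HasDerivAt f _ s := ((hasDerivAt_id s).sub_const (1/2)).sub (hg.mul hh)
      convert this using 1
      field_simp
      ring
    rw [hd.deriv]
    have hlt : Real.log (1 - s) < Real.log s := Real.log_lt_log hs1' (by linarith)
    have : 0 < 2*s - 1 := by linarith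
    exact mul_pos this (by linarith)
  have h0 : f (1/2) = 0 := by norm_num [hf]
  have := hmono (by constructor <;> norm_num) ⟨ht1.le, ht2⟩ ht1
  rw [h0] at this
  simp only [hf] at this
  linarith

/-- QRE response of the second player. -/
noncomputable def qreY (aY bY Ty : ℝ) (x : ℝ) : ℝ :=
  (1 + Real.exp ((bY - (aY + bY) * x) / Ty))⁻¹

/-- QRE temperature curve for the first player. -/
noncomputable def qreTX (aX bX aY bY Ty : ℝ) (x : ℝ) : ℝ :=
  (bX - (aX + bX) * qreY aY bY Ty x) / Real.log (1 / x - 1)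

/-- The auxiliary function L(x) = y(x) + x(1-x) ln(1/x-1) y'(x). -/
noncomputable def qreL (aY bY Ty : ℝ) (x : ℝ) : ℝ :=
  qreY aY bY Ty x + x * (1 - x) * Real.log (1 / x - 1) * deriv (qreY aY bY Ty) x

lemma qreY_hasDerivAt (aY bY Ty x : ℝ) (hTy : Ty ≠ 0) :
    HasDerivAt (qreY aY bY Ty)
      ((aY + bY) / Ty * (qreY aY bY Ty x * (1 - qreY aY bY Ty x))) x := by
  have hE : (0:ℝ) < Real.exp ((bY - (aY + bY) * x) / Ty) := Real.exp_pos _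
  set E := Real.exp ((bY - (aY + bY) * x) / Ty) with hEdef
  have h1E : (0:ℝ) < 1 + E := by linarith
  have hu : HasDerivAt (fun x : ℝ => (bY - (aY + bY) * x) / Ty) (-((aY + bY) * 1) / Ty) x :=
    (((hasDerivAt_id x).const_mul (aY + bY)).const_sub bY).div_const Ty
  have hexp : HasDerivAt (fun x : ℝ => Real.exp ((bY - (aY + bY) * x) / Ty))
      (E * (-((aY + bY) * 1) / Ty)) x := hu.exp
  have h3 : HasDerivAt (fun x : ℝ => 1 + Real.exp ((bY - (aY + bY) * x) / Ty))
      (E * (-((aY + bY) * 1) / Ty)) x := hexp.const_add 1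
  have h4 : HasDerivAt (qreY aY bY Ty) (-(E * (-((aY + bY) * 1) / Ty)) / (1 + E) ^ 2) x :=
    h3.inv (ne_of_gt h1E)
  convert h4 using 1
  show (aY + bY) / Ty * ((1 + E)⁻¹ * (1 - (1 + E)⁻¹)) = _
  field_simp
  ring

set_option maxHeartbeats 1000000 in
theorem stmt_5 (aX bX aY bY Ty : ℝ) (hTy : 0 < Ty)
    (h1 : aX ≥ bX) (h2 : bX ≥ 0) (h3 : 0 < aX) (h4 : aY + bY > 0) (h5 : aY ≥ bY) :
    ∀ x ∈ Set.Ioo (1/2 : ℝ) 1, deriv (qreTX aX bX aY bY Ty) x < 0 := by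
  intro x hx
  obtain ⟨hx1, hx2⟩ := hx
  have hx0 : (0:ℝ) < x := by linarith
  have hx1' : (0:ℝ) < 1 - x := by linarith
  have hc : 0 < (aY + bY) / Ty := div_pos h4 hTy
  set c := (aY + bY) / Ty with hcdef
  set y := qreY aY bY Ty x with hydef
  have hE : (0:ℝ) < Real.exp ((bY - (aY + bY) * x) / Ty) := Real.exp_pos _
  set E := Real.exp ((bY - (aY + bY) * x) / Ty) with hEdef
  have h1E : (0:ℝ) < 1 + E := by linarith
  have hyE : y = (1 + E)⁻¹ := hydef
  have hu_neg : (bY - (aY + bY) * x) / Ty < 0 := by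
    apply div_neg_of_neg_of_pos _ hTy
    nlinarith
  have hE1 : E < 1 := by
    rw [hEdef]
    exact Real.exp_lt_one_iff.mpr hu_neg
  have hy_half : 1/2 < y := by
    rw [hyE]
    have h2E : 1 + E < 2 := by linarith
    have := inv_pos.mpr h1E
    nlinarith [mul_inv_cancel₀ (ne_of_gt h1E)]
  have hy1 : y < 1 := by
    rw [hyE]
    have h2E : 1 < 1 + E := by linarith
    exact inv_lt_one_of_one_lt₀ h2E
  have hy0 : (0:ℝ) < y := by rw [hyE]; positivity
  have hyy : 0 < y * (1 - y) := mul_pos hy0 (by linarith)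
  have hlogit : Real.log y - Real.log (1 - y) = -((bY - (aY + bY) * x) / Ty) := by
    have h1y : 1 - y = E / (1 + E) := by rw [hyE]; field_simp; ring
    rw [h1y, hyE, Real.log_inv, Real.log_div (ne_of_gt hE) (ne_of_gt h1E), hEdef, Real.log_exp]
    ring
  have hy' : HasDerivAt (qreY aY bY Ty) (c * (y * (1 - y))) x :=
    qreY_hasDerivAt aY bY Ty x (ne_of_gt hTy)
  have hfrac : 1/x - 1 = (1 - x)/x := by field_simp
  have hℓ : Real.log (1/x - 1) = Real.log (1 - x) - Real.log x := by
    rw [hfrac, Real.log_div (ne_of_gt hx1') (ne_of_gt hx0)]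
  have hℓneg : Real.log (1/x - 1) < 0 := by
    rw [hℓ]
    have := Real.log_lt_log hx1' (show 1 - x < x by linarith)
    linarith
  have hD : HasDerivAt (fun x : ℝ => Real.log (1/x - 1)) (-(1/(x * (1 - x)))) x := by
    have hin : HasDerivAt (fun x : ℝ => 1/x - 1) (-(x^2)⁻¹) x := by
      simpa [one_div] using ((hasDerivAt_inv (ne_of_gt hx0)).sub_const 1)
    have h0 : 1/x - 1 ≠ 0 := by rw [hfrac]; exact ne_of_gt (div_pos hx1' hx0)
    have := hin.log h0
    convert this using 1
    rw [hfrac]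
    field_simp
  have hN : HasDerivAt (fun x : ℝ => bX - (aX + bX) * qreY aY bY Ty x)
      (-((aX + bX) * (c * (y * (1 - y))))) x := (hy'.const_mul (aX + bX)).const_sub bX
  have hTX : HasDerivAt (qreTX aX bX aY bY Ty)
      ((-((aX + bX) * (c * (y * (1 - y)))) * Real.log (1/x - 1) -
        (bX - (aX + bX) * y) * -(1/(x * (1 - x)))) / (Real.log (1/x - 1))^2) x := by
    have heq : qreTX aX bX aY bY Ty =
        fun x : ℝ => (bX - (aX + bX) * qreY aY bY Ty x) / Real.log (1/x - 1) := rfl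
    rw [heq]
    exact hN.div hD (ne_of_lt hℓneg)
  rw [hTX.deriv]
  have hsq : 0 < (Real.log (1/x - 1))^2 :=
    pow_two_pos_of_ne_zero (ne_of_lt hℓneg)
  apply div_neg_of_neg_of_pos _ hsq
  -- Reduce to the key inequality on L
  have hxx : 0 < x * (1 - x) := mul_pos hx0 hx1'
  set ℓ := Real.log (1/x - 1) with hℓdef
  have key_x := key_ineq hx1 hx2
  have key_y := key_ineq hy_half hy1
  have hlogit_ge : c * (x - 1/2) ≤ Real.log y - Real.log (1 - y) := by
    rw [hlogit]
    have h' : (aY + bY) * (x - 1/2) ≤ (aY + bY) * x - bY := by nlinarith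
    calc c * (x - 1/2) = ((aY + bY) * (x - 1/2)) / Ty := by rw [hcdef]; ring
      _ ≤ ((aY + bY) * x - bY) / Ty := by gcongr
      _ = -((bY - (aY + bY) * x) / Ty) := by ring
  have habx : (0:ℝ) < aX + bX := by linarith
  have hL_half : 1/2 < y + c * (x * (1 - x)) * ℓ * (y * (1 - y)) := by
    rw [hℓ]
    have A := mul_lt_mul_of_pos_left key_x (mul_pos hc hyy)
    have B := mul_le_mul_of_nonneg_left hlogit_ge hyy.le
    nlinarith [A, B, key_y]
  have hnum : x * (1 - x) *
      (-((aX + bX) * (c * (y * (1 - y)))) * ℓ - (bX - (aX + bX) * y) * -(1/(x * (1 - x))))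
      = bX - (aX + bX) * (y + c * (x * (1 - x)) * ℓ * (y * (1 - y))) := by
    field_simp
    ring
  have hLgt : bX - (aX + bX) * (y + c * (x * (1 - x)) * ℓ * (y * (1 - y))) < 0 := by
    nlinarith [mul_lt_mul_of_pos_left hL_half habx]
  by_contra hA
  push_neg at hA
  rw [← hnum] at hLgt
  nlinarith [mul_nonneg hxx.le hA]
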